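/- If X is a geodesic metric space in which every geodesic triangle is δ-slim, then X is Gromov 8δ-hyperbolic: for any four points x₁,x₂,x₃,x₄ ∈ X, d(x₁,x₂) + d(x₃,x₄) ≤ max{d(x₁,x₃)+d(x₂,x₄), d(x₁,x₄)+d(x₂,x₃)} + 8δ. -/

import Mathlib

/-- `γ` is a geodesic from `x` to `y`: an isometric embedding of `[0, dist x y]`
with `γ 0 = x` and `γ (dist x y) = y`. -/
def IsGeodesicFrom {X : Type*} [MetricSpace X] (x y : X) (γ : ℝ → X) : Prop :=
  γ 0 = x ∧ γ (dist x y) = y ∧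
    ∀ s ∈ Set.Icc (0:ℝ) (dist x y), ∀ t ∈ Set.Icc (0:ℝ) (dist x y),
      dist (γ s) (γ t) = |s - t|

/-- A metric space is geodesic if every pair of points is joined by a geodesic. -/
def GeodesicSpace (X : Type*) [MetricSpace X] : Prop :=
  ∀ x y : X, ∃ γ : ℝ → X, IsGeodesicFrom x y γ

/-- Every geodesic triangle of `X` is δ-slim: each side is contained in the closed
δ-neighbourhood of the union of the two other sides. -/
def SlimTriangles (X : Type*) [MetricSpace X] (δ : ℝ) : Prop :=
  ∀ (x₁ x₂ x₃ : X) (γ₁₂ γ₁₃ γ₂₃ : ℝ → X),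
    IsGeodesicFrom x₁ x₂ γ₁₂ → IsGeodesicFrom x₁ x₃ γ₁₃ → IsGeodesicFrom x₂ x₃ γ₂₃ →
    (∀ p ∈ γ₁₂ '' Set.Icc (0:ℝ) (dist x₁ x₂),
      ∃ q ∈ γ₁₃ '' Set.Icc (0:ℝ) (dist x₁ x₃) ∪ γ₂₃ '' Set.Icc (0:ℝ) (dist x₂ x₃),
        dist p q ≤ δ) ∧
    (∀ p ∈ γ₁₃ '' Set.Icc (0:ℝ) (dist x₁ x₃),
      ∃ q ∈ γ₁₂ '' Set.Icc (0:ℝ) (dist x₁ x₂) ∪ γ₂₃ '' Set.Icc (0:ℝ) (dist x₂ x₃),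
        dist p q ≤ δ) ∧
    (∀ p ∈ γ₂₃ '' Set.Icc (0:ℝ) (dist x₂ x₃),
      ∃ q ∈ γ₁₂ '' Set.Icc (0:ℝ) (dist x₁ x₂) ∪ γ₁₃ '' Set.Icc (0:ℝ) (dist x₁ x₃),
        dist p q ≤ δ)

open Set Metric

lemma geodesic_continuousOn {X : Type*} [MetricSpace X] {x y : X} {γ : ℝ → X}
    (h : IsGeodesicFrom x y γ) : ContinuousOn γ (Icc 0 (dist x y)) := by
  apply (LipschitzOnWith.continuousOn (K := 1))
  intro s hs t ht
  rw [edist_dist, h.2.2 s hs t ht]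
  simp [Real.dist_eq, edist_dist]

lemma geodesic_compact_image {X : Type*} [MetricSpace X] {x y : X} {γ : ℝ → X}
    (h : IsGeodesicFrom x y γ) : IsCompact (γ '' Icc 0 (dist x y)) :=
  isCompact_Icc.image_of_continuousOn (geodesic_continuousOn h)

/-- Key step: on a geodesic from `x` to `y` there is a point simultaneously
δ-close to the two other sides of a triangle with apex `z`, which yields the
two "2δ-almost on a geodesic" estimates. -/
lemma exists_mid {X : Type*} [MetricSpace X] (hgeo : GeodesicSpace X)
    {δ : ℝ} (hslim : SlimTriangles X δ) (x y z : X) {γ : ℝ → X}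
    (hγ : IsGeodesicFrom x y γ) :
    ∃ t ∈ Icc (0:ℝ) (dist x y),
      t + dist (γ t) z ≤ dist x z + 2*δ ∧
      (dist x y - t) + dist (γ t) z ≤ dist y z + 2*δ := by
  obtain ⟨γ₁, hγ₁⟩ := hgeo x z
  obtain ⟨γ₂, hγ₂⟩ := hgeo y z
  have H := (hslim x y z γ γ₁ γ₂ hγ hγ₁ hγ₂).1
  set L := dist x y with hL
  set S₁ := γ₁ '' Icc (0:ℝ) (dist x z) with hS₁
  set S₂ := γ₂ '' Icc (0:ℝ) (dist y z) with hS₂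
  have hS₁ne : S₁.Nonempty := ⟨γ₁ 0, 0, ⟨le_refl _, dist_nonneg⟩, rfl⟩
  have hS₂ne : S₂.Nonempty := ⟨γ₂ 0, 0, ⟨le_refl _, dist_nonneg⟩, rfl⟩
  have hS₁c : IsCompact S₁ := geodesic_compact_image hγ₁
  have hS₂c : IsCompact S₂ := geodesic_compact_image hγ₂
  -- the two closed subsets of [0,L]
  set A := Icc (0:ℝ) L ∩ (fun t => infDist (γ t) S₁) ⁻¹' Iic δ with hA
  set B := Icc (0:ℝ) L ∩ (fun t => infDist (γ t) S₂) ⁻¹' Iic δ with hB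
  have hAc : IsClosed A := by
    apply ContinuousOn.preimage_isClosed_of_isClosed
      ((continuous_infDist_pt S₁).comp_continuousOn (geodesic_continuousOn hγ)) isClosed_Icc isClosed_Iic
  have hBc : IsClosed B := by
    apply ContinuousOn.preimage_isClosed_of_isClosed
      ((continuous_infDist_pt S₂).comp_continuousOn (geodesic_continuousOn hγ)) isClosed_Icc isClosed_Iic
  have hcover : Icc (0:ℝ) L ⊆ A ∪ B := by
    intro t ht
    obtain ⟨q, hq, hdq⟩ := H (γ t) ⟨t, ht, rfl⟩
    rcases hq with hq | hq
    · exact Or.inl ⟨ht, le_trans (infDist_le_dist_of_mem hq) hdq⟩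
    · exact Or.inr ⟨ht, le_trans (infDist_le_dist_of_mem hq) hdq⟩
  have h0A : (Icc (0:ℝ) L ∩ A).Nonempty := by
    refine ⟨0, ⟨le_refl _, dist_nonneg⟩, ⟨le_refl _, dist_nonneg⟩, ?_⟩
    have hx : x ∈ S₁ := ⟨0, ⟨le_refl _, dist_nonneg⟩, hγ₁.1⟩
    simp only [mem_preimage, mem_Iic, hγ.1]
    calc infDist x S₁ ≤ dist x x := infDist_le_dist_of_mem hx
      _ = 0 := dist_self x
      _ ≤ δ := by
          obtain ⟨q, hq, hdq⟩ := H x ⟨0, ⟨le_refl _, dist_nonneg⟩, hγ.1⟩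
          exact le_trans dist_nonneg hdq
  have hLB : (Icc (0:ℝ) L ∩ B).Nonempty := by
    refine ⟨L, ⟨dist_nonneg, le_refl _⟩, ⟨dist_nonneg, le_refl _⟩, ?_⟩
    have hy : y ∈ S₂ := ⟨0, ⟨le_refl _, dist_nonneg⟩, hγ₂.1⟩
    simp only [mem_preimage, mem_Iic, hL, hγ.2.1]
    calc infDist y S₂ ≤ dist y y := infDist_le_dist_of_mem hy
      _ = 0 := dist_self y
      _ ≤ δ := by
          obtain ⟨q, hq, hdq⟩ := H y ⟨L, ⟨dist_nonneg, le_refl _⟩, hγ.2.1⟩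
          exact le_trans dist_nonneg hdq
  obtain ⟨t, ht, htA, htB⟩ :=
    isPreconnected_closed_iff.1 isPreconnected_Icc A B hAc hBc hcover h0A hLB
  refine ⟨t, ht, ?_, ?_⟩
  · -- use a closest point on S₁
    obtain ⟨a, haS, hda⟩ := hS₁c.exists_infDist_eq_dist hS₁ne (γ t)
    have hdaδ : dist (γ t) a ≤ δ := by rw [← hda]; exact htA.2
    obtain ⟨s, hs, rfl⟩ := haS
    have hxa : dist x (γ₁ s) = s := by
      have := hγ₁.2.2 0 ⟨le_refl _, dist_nonneg⟩ s hs
      rw [hγ₁.1] at this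
      rw [this, abs_of_nonpos (by linarith [hs.1])]; ring
    have haz : dist (γ₁ s) z = dist x z - s := by
      have := hγ₁.2.2 s hs (dist x z) ⟨dist_nonneg, le_refl _⟩
      rw [hγ₁.2.1] at this
      rw [this, abs_of_nonpos (by linarith [hs.2])]; ring
    have hxt : dist x (γ t) = t := by
      have := hγ.2.2 0 ⟨le_refl _, dist_nonneg⟩ t ht
      rw [hγ.1] at this
      rw [this, abs_of_nonpos (by linarith [ht.1])]; ring
    have h1 : dist x (γ t) ≤ dist x (γ₁ s) + dist (γ₁ s) (γ t) := dist_triangle _ _ _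
    have h2 : dist (γ t) z ≤ dist (γ t) (γ₁ s) + dist (γ₁ s) z := dist_triangle _ _ _
    have h3 : dist (γ₁ s) (γ t) = dist (γ t) (γ₁ s) := dist_comm _ _
    rw [hxa] at h1; rw [haz] at h2
    linarith [hxt]
  · obtain ⟨b, hbS, hdb⟩ := hS₂c.exists_infDist_eq_dist hS₂ne (γ t)
    have hdbδ : dist (γ t) b ≤ δ := by rw [← hdb]; exact htB.2
    obtain ⟨u, hu, rfl⟩ := hbS
    have hyb : dist y (γ₂ u) = u := by
      have := hγ₂.2.2 0 ⟨le_refl _, dist_nonneg⟩ u hu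
      rw [hγ₂.1] at this
      rw [this, abs_of_nonpos (by linarith [hu.1])]; ring
    have hbz : dist (γ₂ u) z = dist y z - u := by
      have := hγ₂.2.2 u hu (dist y z) ⟨dist_nonneg, le_refl _⟩
      rw [hγ₂.2.1] at this
      rw [this, abs_of_nonpos (by linarith [hu.2])]; ring
    have hyt : dist (γ t) y = L - t := by
      have := hγ.2.2 t ht L ⟨dist_nonneg, le_refl _⟩
      rw [hγ.2.1] at this
      rw [this, abs_of_nonpos (by linarith [ht.2])]; ring
    have h1 : dist (γ t) y ≤ dist (γ t) (γ₂ u) + dist (γ₂ u) y := dist_triangle _ _ _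
    rw [dist_comm (γ₂ u) y] at h1
    have h2 : dist (γ t) z ≤ dist (γ t) (γ₂ u) + dist (γ₂ u) z := dist_triangle _ _ _
    have h3 : dist (γ₂ u) (γ t) = dist (γ t) (γ₂ u) := dist_comm _ _
    rw [hyb] at h1; rw [hbz] at h2
    linarith [hyt]

/-- A geodesic space with δ-slim triangles is Gromov 8δ-hyperbolic. -/
theorem stmt16 {X : Type*} [MetricSpace X] (hgeo : GeodesicSpace X)
    (δ : ℝ) (hδ : 0 ≤ δ) (hslim : SlimTriangles X δ) :
    ∀ x₁ x₂ x₃ x₄ : X,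
      dist x₁ x₂ + dist x₃ x₄ ≤
        max (dist x₁ x₃ + dist x₂ x₄) (dist x₁ x₄ + dist x₂ x₃) + 8 * δ := by
  intro x₁ x₂ x₃ x₄
  obtain ⟨γ, hγ⟩ := hgeo x₁ x₂
  set L := dist x₁ x₂ with hL
  obtain ⟨t, ht, h13, h23⟩ := exists_mid hgeo hslim x₁ x₂ x₃ hγ
  obtain ⟨t', ht', h14, h24⟩ := exists_mid hgeo hslim x₁ x₂ x₄ hγ
  have hmm : dist (γ t) (γ t') = |t - t'| := hγ.2.2 t ht t' ht'
  have h34 : dist x₃ x₄ ≤ dist (γ t) x₃ + |t - t'| + dist (γ t') x₄ := by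
    calc dist x₃ x₄ ≤ dist x₃ (γ t) + dist (γ t) x₄ := dist_triangle _ _ _
      _ ≤ dist x₃ (γ t) + (dist (γ t) (γ t') + dist (γ t') x₄) := by
          linarith [dist_triangle (γ t) (γ t') x₄]
      _ = dist (γ t) x₃ + |t - t'| + dist (γ t') x₄ := by
          rw [dist_comm x₃ (γ t), hmm]; ring
  rcases le_total t t' with hc | hc
  · have habs : |t - t'| = t' - t := by rw [abs_of_nonpos (by linarith)]; ring
    rw [habs] at h34
    have : dist x₁ x₂ + dist x₃ x₄ ≤ dist x₁ x₄ + dist x₂ x₃ + 4 * δ := by linarith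
    calc dist x₁ x₂ + dist x₃ x₄ ≤ dist x₁ x₄ + dist x₂ x₃ + 4 * δ := this
      _ ≤ max (dist x₁ x₃ + dist x₂ x₄) (dist x₁ x₄ + dist x₂ x₃) + 8 * δ := by
          have := le_max_right (dist x₁ x₃ + dist x₂ x₄) (dist x₁ x₄ + dist x₂ x₃)
          linarith
  · have habs : |t - t'| = t - t' := abs_of_nonneg (by linarith)
    rw [habs] at h34
    have : dist x₁ x₂ + dist x₃ x₄ ≤ dist x₁ x₃ + dist x₂ x₄ + 4 * δ := by linarith
    calc dist x₁ x₂ + dist x₃ x₄ ≤ dist x₁ x₃ + dist x₂ x₄ + 4 * δ := this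
      _ ≤ max (dist x₁ x₃ + dist x₂ x₄) (dist x₁ x₄ + dist x₂ x₃) + 8 * δ := by
          have := le_max_left (dist x₁ x₃ + dist x₂ x₄) (dist x₁ x₄ + dist x₂ x₃)
          linarith
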